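/- For every X ∈ ℝ^{m×n} and every k ≥ rank(X), the nuclear norm satisfies ‖X‖_* = Σ_{i=1}^{N} σ_i(X) = min { (‖B‖_F² + ‖C‖_F²)/2 : B ∈ ℝ^{m×k}, C ∈ ℝ^{n×k}, BCᵀ = X }, and the minimum is attained. -/

import Mathlib

noncomputable section
open Matrix Real

/-- The singular values of a real `m × n` matrix, in descending order,
indexed by `Fin (min m n)`: square roots of the eigenvalues of `Xᴴ * X`. -/
def sVal {m n : ℕ} (X : Matrix (Fin m) (Fin n) ℝ) (i : Fin (min m n)) : ℝ :=
  Real.sqrt ((show (Xᵀ * X).IsHermitian by simpa using Matrix.isHermitian_conjTranspose_mul_self X).eigenvalues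
    (Tuple.sort (fun j => -(show (Xᵀ * X).IsHermitian by simpa using Matrix.isHermitian_conjTranspose_mul_self X).eigenvalues j)
      (Fin.castLE (Nat.min_le_right m n) i)))

def regR {m n : ℕ} (f : ℝ → ℝ) (X : Matrix (Fin m) (Fin n) ℝ) : ℝ :=
  ∑ i, f (sVal X i)

def colNormSq {m k : ℕ} (B : Matrix (Fin m) (Fin k) ℝ) (i : Fin k) : ℝ :=
  ∑ j, (B j i) ^ 2

def colNorm {m k : ℕ} (B : Matrix (Fin m) (Fin k) ℝ) (i : Fin k) : ℝ :=
  Real.sqrt (colNormSq B i)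

def Rt {m n k : ℕ} (f : ℝ → ℝ) (B : Matrix (Fin m) (Fin k) ℝ)
    (C : Matrix (Fin n) (Fin k) ℝ) : ℝ :=
  ∑ i, f ((colNormSq B i + colNormSq C i) / 2)

/-- Frobenius inner product `⟨X,Y⟩ = tr(XᵀY)`. -/
def frobInner {m n : ℕ} (X Y : Matrix (Fin m) (Fin n) ℝ) : ℝ :=
  (Xᵀ * Y).trace

def frobSq {m n : ℕ} (X : Matrix (Fin m) (Fin n) ℝ) : ℝ :=
  (Xᵀ * X).trace

def fmu (μ x : ℝ) : ℝ := μ - max (Real.sqrt μ - x) 0 ^ 2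

namespace NuclearAux

variable {m n k : ℕ}

def ev (X : Matrix (Fin m) (Fin n) ℝ) (j : Fin n) : ℝ :=
  (show (Xᵀ * X).IsHermitian by simpa using Matrix.isHermitian_conjTranspose_mul_self X).eigenvalues j

def evec (X : Matrix (Fin m) (Fin n) ℝ) (j : Fin n) : Fin n → ℝ :=
  ((show (Xᵀ * X).IsHermitian by simpa using Matrix.isHermitian_conjTranspose_mul_self X).eigenvectorBasis j : EuclideanSpace ℝ (Fin n))

lemma ev_nonneg (X : Matrix (Fin m) (Fin n) ℝ) (j : Fin n) : 0 ≤ ev X j := by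
  have h : (Xᵀ * X).PosSemidef := by
    simpa using Matrix.posSemidef_conjTranspose_mul_self X
  exact h.eigenvalues_nonneg j

lemma evec_dot (X : Matrix (Fin m) (Fin n) ℝ) (i j : Fin n) :
    evec X i ⬝ᵥ evec X j = if i = j then 1 else 0 := by
  have h := (show (Xᵀ * X).IsHermitian by simpa using Matrix.isHermitian_conjTranspose_mul_self X).eigenvectorBasis.orthonormal
  rw [orthonormal_iff_ite] at h
  have := h i j
  simpa [PiLp.inner_apply, dotProduct, evec, mul_comm] using this

lemma mulvec_evec (X : Matrix (Fin m) (Fin n) ℝ) (j : Fin n) :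
    (Xᵀ * X) *ᵥ evec X j = ev X j • evec X j :=
  (show (Xᵀ * X).IsHermitian by simpa using Matrix.isHermitian_conjTranspose_mul_self X).mulVec_eigenvectorBasis j

lemma key_dot (X : Matrix (Fin m) (Fin n) ℝ) (i j : Fin n) :
    (X *ᵥ evec X i) ⬝ᵥ (X *ᵥ evec X j) = if i = j then ev X j else 0 := by
  have h1 : evec X i ⬝ᵥ ((Xᵀ * X) *ᵥ evec X j)
      = (X *ᵥ evec X i) ⬝ᵥ (X *ᵥ evec X j) := by
    rw [← Matrix.mulVec_mulVec, Matrix.dotProduct_mulVec, Matrix.vecMul_transpose]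
  rw [← h1, mulvec_evec, dotProduct_smul, evec_dot]
  simp [mul_comm]

lemma xv_zero (X : Matrix (Fin m) (Fin n) ℝ) {j : Fin n} (h : ev X j = 0) :
    X *ᵥ evec X j = 0 := by
  have := key_dot X j j
  simp [h] at this
  exact this

lemma parseval (X : Matrix (Fin m) (Fin n) ℝ) (c b : Fin n) :
    ∑ j, evec X j c * evec X j b = if c = b then 1 else 0 := by
  classical
  set V : Matrix (Fin n) (Fin n) ℝ := Matrix.of (fun a j => evec X j a) with hV
  have hVtV : Vᵀ * V = 1 := by
    ext i j
    simpa [Matrix.mul_apply, Matrix.one_apply, dotProduct, V] using evec_dot X i j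
  have hVVt : V * Vᵀ = 1 := mul_eq_one_comm.mp hVtV
  have := congrFun (congrFun hVVt c) b
  simpa [Matrix.mul_apply, Matrix.one_apply, V] using this

lemma decomp (X : Matrix (Fin m) (Fin n) ℝ) (a : Fin m) (b : Fin n) :
    X a b = ∑ j, (X *ᵥ evec X j) a * evec X j b := by
  have : ∑ j, (X *ᵥ evec X j) a * evec X j b
      = ∑ c, X a c * ∑ j, evec X j c * evec X j b := by
    simp only [Matrix.mulVec, dotProduct, Finset.sum_mul, Finset.mul_sum]
    rw [Finset.sum_comm]
    simp only [mul_assoc]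
  rw [this]
  simp [parseval]

lemma card_pos_eigs (X : Matrix (Fin m) (Fin n) ℝ) :
    (Finset.univ.filter (fun j => ev X j ≠ 0)).card = X.rank := by
  have h := (show (Xᵀ * X).IsHermitian by simpa using Matrix.isHermitian_conjTranspose_mul_self X).rank_eq_card_non_zero_eigs
  rw [Matrix.rank_transpose_mul_self] at h
  rw [h, Fintype.card_subtype]; rfl

lemma rank_le_min (X : Matrix (Fin m) (Fin n) ℝ) : X.rank ≤ min m n :=
  le_min (Matrix.rank_le_height X) (Matrix.rank_le_width X)

lemma tail_zero (X : Matrix (Fin m) (Fin n) ℝ) {j : Fin n} (hj : min m n ≤ (j : ℕ)) :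
    ev X (Tuple.sort (fun j => -(ev X j)) j) = 0 := by
  classical
  set g : Fin n → ℝ := fun j => -(ev X j) with hg
  set σ := Tuple.sort g with hσ
  by_contra h
  have hmono : Monotone (g ∘ σ) := Tuple.monotone_sort g
  have hpos : ∀ i : Fin n, i ≤ j → ev X (σ i) ≠ 0 := by
    intro i hij
    have h1 : g (σ i) ≤ g (σ j) := hmono hij
    have h2 : 0 < ev X (σ j) := lt_of_le_of_ne (ev_nonneg X _) (Ne.symm h)
    have : 0 < ev X (σ i) := by
      simp only [g] at h1; linarith
    exact ne_of_gt this
  have hsub : Finset.Iic j ⊆ Finset.univ.filter (fun i => ev X (σ i) ≠ 0) := by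
    intro i hi
    simp only [Finset.mem_Iic] at hi
    simp [hpos i hi]
  have hcard1 : (Finset.Iic j).card = (j : ℕ) + 1 := by
    rw [Fin.card_Iic]
  have hcard2 : (Finset.univ.filter (fun i => ev X (σ i) ≠ 0)).card
      = (Finset.univ.filter (fun i => ev X i ≠ 0)).card := by
    apply Finset.card_nbij (fun i => σ i)
    · intro a ha; simpa using ha
    · intro a ha b hb hab; exact σ.injective hab
    · intro b hb
      refine ⟨σ.symm b, ?_, by simp⟩
      simp only [Finset.mem_coe, Finset.mem_filter] at *
      exact ⟨Finset.mem_univ _, by simpa using hb.2⟩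
  have := Finset.card_le_card hsub
  rw [hcard1, hcard2, card_pos_eigs] at this
  have : (j:ℕ) + 1 ≤ min m n := le_trans this (rank_le_min X)
  omega

lemma sum_sval (X : Matrix (Fin m) (Fin n) ℝ) :
    ∑ i, sVal X i = ∑ j, Real.sqrt (ev X j) := by
  classical
  set g : Fin n → ℝ := fun j => -(ev X j) with hg
  set σ := Tuple.sort g with hσ
  have h1 : ∑ j : Fin n, Real.sqrt (ev X j) = ∑ j : Fin n, Real.sqrt (ev X (σ j)) :=
    (Equiv.sum_comp σ (fun j => Real.sqrt (ev X j))).symm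
  rw [h1]
  have h2 : ∑ i : Fin (min m n), sVal X i
      = ∑ j ∈ Finset.univ.map (Fin.castLEEmb (Nat.min_le_right m n)),
        Real.sqrt (ev X (σ j)) := by
    rw [Finset.sum_map]
    rfl
  rw [h2]
  apply Finset.sum_subset (Finset.subset_univ _)
  intro j _ hj
  have hjge : min m n ≤ (j : ℕ) := by
    by_contra hlt
    push_neg at hlt
    exact hj (by simp [Finset.mem_map]; exact ⟨⟨(j:ℕ), hlt⟩, by simp [Fin.castLEEmb]⟩)
  rw [tail_zero X hjge]
  simp

lemma frobSq_eq (M : Matrix (Fin m) (Fin k) ℝ) :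
    frobSq M = ∑ c, ∑ a, (M a c) ^ 2 := by
  simp [frobSq, Matrix.trace, Matrix.mul_apply, Matrix.diag, sq]

lemma collapse {γ : Type*} [DecidableEq γ] (s : Finset γ) (ι : γ → Fin k)
    (hι : Set.InjOn ι s) (x y : γ → ℝ) :
    ∑ c : Fin k, (∑ j ∈ s, if ι j = c then x j else 0) *
      (∑ j ∈ s, if ι j = c then y j else 0) = ∑ j ∈ s, x j * y j := by
  classical
  simp only [Finset.sum_mul_sum]
  rw [Finset.sum_comm]
  refine Finset.sum_congr rfl (fun j hj => ?_)
  rw [Finset.sum_comm]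
  have h1 : ∀ j' ∈ s, ∑ c : Fin k, (if ι j = c then x j else 0) * (if ι j' = c then y j' else 0)
      = if j' = j then x j * y j' else 0 := by
    intro j' hj'
    have : ∀ c : Fin k, (if ι j = c then x j else 0) * (if ι j' = c then y j' else 0)
        = if ι j = c then (if ι j' = c then x j * y j' else 0) else 0 := by
      intro c; split <;> split <;> simp_all
    simp only [this, Finset.sum_ite_eq, Finset.mem_univ, if_true]
    by_cases h : j' = j
    · simp [h]
    · have : ι j' ≠ ι j := fun he => h (hι hj' hj he)
      simp [this, h]
  rw [Finset.sum_congr rfl h1, Finset.sum_ite_eq' s j (fun j' => x j * y j')]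
  simp [hj]

lemma sum_dot {ι : Type*} (s : Finset ι) (f : ι → Fin m → ℝ) (b : Fin m → ℝ) :
    (∑ j ∈ s, f j) ⬝ᵥ b = ∑ j ∈ s, f j ⬝ᵥ b := by
  simp only [dotProduct, Finset.sum_apply, Finset.sum_mul]
  exact Finset.sum_comm

lemma dot_sum {ι : Type*} (s : Finset ι) (f : ι → Fin m → ℝ) (b : Fin m → ℝ) :
    b ⬝ᵥ (∑ j ∈ s, f j) = ∑ j ∈ s, b ⬝ᵥ f j := by
  rw [dotProduct_comm, sum_dot]
  exact Finset.sum_congr rfl fun j _ => dotProduct_comm _ _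

lemma dot_amgm (x y : Fin k → ℝ) : x ⬝ᵥ y ≤ (x ⬝ᵥ x + y ⬝ᵥ y) / 2 := by
  have h : (0:ℝ) ≤ (x - y) ⬝ᵥ (x - y) := Finset.sum_nonneg fun i _ => mul_self_nonneg _
  have hexp : (x - y) ⬝ᵥ (x - y) = x ⬝ᵥ x - 2 * (x ⬝ᵥ y) + y ⬝ᵥ y := by
    rw [sub_dotProduct, dotProduct_sub, dotProduct_sub,
      dotProduct_comm y x]
    ring
  linarith

lemma bessel {γ : Type*} [DecidableEq γ] (s : Finset γ) (u : γ → Fin m → ℝ)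
    (hu : ∀ i ∈ s, ∀ j ∈ s, u i ⬝ᵥ u j = if i = j then 1 else 0) (b : Fin m → ℝ) :
    ∑ j ∈ s, (b ⬝ᵥ u j) ^ 2 ≤ b ⬝ᵥ b := by
  classical
  set r : Fin m → ℝ := b - ∑ j ∈ s, (b ⬝ᵥ u j) • u j with hr
  have h0 : 0 ≤ r ⬝ᵥ r := Finset.sum_nonneg (fun i _ => mul_self_nonneg _)
  have hexp : r ⬝ᵥ r = b ⬝ᵥ b - ∑ j ∈ s, (b ⬝ᵥ u j) ^ 2 := by
    rw [hr, sub_dotProduct, dotProduct_sub, dotProduct_sub,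
      dot_sum, sum_dot]
    have e1 : ∑ j ∈ s, b ⬝ᵥ (b ⬝ᵥ u j) • u j = ∑ j ∈ s, (b ⬝ᵥ u j) ^ 2 := by
      refine Finset.sum_congr rfl fun j hj => ?_
      rw [dotProduct_smul]; simp [sq]
    have e2 : ∑ j ∈ s, ((b ⬝ᵥ u j) • u j) ⬝ᵥ b = ∑ j ∈ s, (b ⬝ᵥ u j) ^ 2 := by
      refine Finset.sum_congr rfl fun j hj => ?_
      rw [smul_dotProduct, dotProduct_comm]; simp [sq]
    have e3 : ∑ j ∈ s, ((b ⬝ᵥ u j) • u j) ⬝ᵥ (∑ j' ∈ s, (b ⬝ᵥ u j') • u j')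
        = ∑ j ∈ s, (b ⬝ᵥ u j) ^ 2 := by
      refine Finset.sum_congr rfl fun j hj => ?_
      rw [dot_sum]
      have : ∀ j' ∈ s, ((b ⬝ᵥ u j) • u j) ⬝ᵥ ((b ⬝ᵥ u j') • u j')
          = if j = j' then (b ⬝ᵥ u j) * (b ⬝ᵥ u j') else 0 := by
        intro j' hj'
        rw [smul_dotProduct, dotProduct_smul, hu j hj j' hj']
        split <;> simp [mul_comm]
      rw [Finset.sum_congr rfl this, Finset.sum_ite_eq s j]
      simp [hj, sq]
    rw [e1, e2, sum_dot, e3]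
    ring
  linarith

lemma mbessel {γ : Type*} [DecidableEq γ] (s : Finset γ) (u : γ → Fin m → ℝ)
    (hu : ∀ i ∈ s, ∀ j ∈ s, u i ⬝ᵥ u j = if i = j then 1 else 0)
    (M : Matrix (Fin m) (Fin k) ℝ) :
    ∑ j ∈ s, (Mᵀ *ᵥ u j) ⬝ᵥ (Mᵀ *ᵥ u j) ≤ frobSq M := by
  have h : ∀ j : γ, (Mᵀ *ᵥ u j) ⬝ᵥ (Mᵀ *ᵥ u j) = ∑ c, ((fun a => M a c) ⬝ᵥ u j) ^ 2 := by
    intro j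
    simp only [dotProduct, Matrix.mulVec, Matrix.transpose_apply, sq, dotProduct]
  calc ∑ j ∈ s, (Mᵀ *ᵥ u j) ⬝ᵥ (Mᵀ *ᵥ u j)
      = ∑ c, ∑ j ∈ s, ((fun a => M a c) ⬝ᵥ u j) ^ 2 := by
        rw [Finset.sum_congr rfl (fun j _ => h j)]; exact Finset.sum_comm
    _ ≤ ∑ c, (fun a => M a c) ⬝ᵥ (fun a => M a c) :=
        Finset.sum_le_sum fun c _ => bessel s u hu _
    _ = frobSq M := by
        rw [frobSq_eq]
        exact Finset.sum_congr rfl fun c _ => by simp [dotProduct, sq]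

end NuclearAux

open NuclearAux

/-- For every `X` and every `k ≥ rank X`, the nuclear norm
`‖X‖_* = Σᵢ σᵢ(X)` is the attained minimum of `(‖B‖_F² + ‖C‖_F²)/2` over all
factorizations `X = B Cᵀ` with `k` columns. -/
theorem nuclear_norm_bilinear {m n k : ℕ} (X : Matrix (Fin m) (Fin n) ℝ)
    (hk : X.rank ≤ k) :
    IsLeast { s : ℝ | ∃ (B : Matrix (Fin m) (Fin k) ℝ) (C : Matrix (Fin n) (Fin k) ℝ),
        B * Cᵀ = X ∧ s = (frobSq B + frobSq C) / 2 }
      (∑ i, sVal X i) := by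
  classical
  set P : Finset (Fin n) := Finset.univ.filter (fun j => ev X j ≠ 0) with hP
  have hPk : P.card ≤ k := by rw [hP, card_pos_eigs]; exact hk
  have hpos : ∀ j ∈ P, 0 < ev X j := fun j hj =>
    lt_of_le_of_ne (ev_nonneg X j) (Ne.symm (by simpa [hP] using hj))
  have hzero : ∀ j ∉ P, ev X j = 0 := fun j hj => by simpa [hP] using hj
  have hsum0 : ∑ j ∈ P, Real.sqrt (ev X j) = ∑ j, Real.sqrt (ev X j) := by
    apply Finset.sum_subset (Finset.filter_subset _ _)
    intro j _ hj
    rw [hzero j hj]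
    simp
  constructor
  · -- membership : construct the optimal factorization
    set ι : {x // x ∈ P} → Fin k := fun j => Fin.castLE hPk (P.equivFin j) with hι
    have hιinj : Function.Injective ι := fun a b hab =>
      P.equivFin.injective (Fin.castLE_injective _ hab)
    set α : Fin n → ℝ := fun j => (Real.sqrt (Real.sqrt (ev X j)))⁻¹ with hα
    set β : Fin n → ℝ := fun j => Real.sqrt (Real.sqrt (ev X j)) with hβ
    set B : Matrix (Fin m) (Fin k) ℝ := Matrix.of (fun a c =>
      ∑ j ∈ P.attach, if ι j = c then α j.1 * (X *ᵥ evec X j.1) a else 0) with hB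
    set C : Matrix (Fin n) (Fin k) ℝ := Matrix.of (fun b c =>
      ∑ j ∈ P.attach, if ι j = c then β j.1 * evec X j.1 b else 0) with hC
    have hw : ∀ j : Fin n, (X *ᵥ evec X j) ⬝ᵥ (X *ᵥ evec X j) = ev X j := by
      intro j; simpa using key_dot X j j
    have hvv : ∀ j : Fin n, evec X j ⬝ᵥ evec X j = 1 := by
      intro j; simpa using evec_dot X j j
    refine ⟨B, C, ?_, ?_⟩
    · -- B * Cᵀ = X
      ext a b
      have h1 : (B * Cᵀ) a b = ∑ j ∈ P.attach,
          (α j.1 * (X *ᵥ evec X j.1) a) * (β j.1 * evec X j.1 b) := by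
        simp only [Matrix.mul_apply, hB, hC, Matrix.transpose_apply, Matrix.of_apply]
        exact collapse P.attach ι hιinj.injOn _ _
      rw [h1]
      have h2 : ∀ j ∈ P.attach, (α j.1 * (X *ᵥ evec X j.1) a) * (β j.1 * evec X j.1 b)
          = (X *ᵥ evec X j.1) a * evec X j.1 b := by
        intro j _
        have hj := hpos j.1 j.2
        have hab : α j.1 * β j.1 = 1 := by
          rw [hα, hβ]
          exact inv_mul_cancel₀ (by positivity)
        calc (α j.1 * (X *ᵥ evec X j.1) a) * (β j.1 * evec X j.1 b)
            = (α j.1 * β j.1) * ((X *ᵥ evec X j.1) a * evec X j.1 b) := by ring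
          _ = (X *ᵥ evec X j.1) a * evec X j.1 b := by rw [hab, one_mul]
      rw [Finset.sum_congr rfl h2,
        Finset.sum_attach P (fun j => (X *ᵥ evec X j) a * evec X j b)]
      rw [decomp X a b]
      apply Finset.sum_subset (Finset.filter_subset _ _)
      intro j _ hj
      rw [xv_zero X (hzero j hj)]
      simp
    · -- the value
      have hBval : frobSq B = ∑ j ∈ P, Real.sqrt (ev X j) := by
        rw [frobSq_eq, Finset.sum_comm]
        have h1 : ∀ a, ∑ c, (B a c) ^ 2 = ∑ j ∈ P.attach,
            (α j.1 * (X *ᵥ evec X j.1) a) * (α j.1 * (X *ᵥ evec X j.1) a) := by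
          intro a
          simp only [sq, hB, Matrix.of_apply]
          exact collapse P.attach ι hιinj.injOn _ _
        rw [Finset.sum_congr rfl (fun a _ => h1 a), Finset.sum_comm]
        have h2 : ∀ j ∈ P.attach, ∑ a, (α j.1 * (X *ᵥ evec X j.1) a) *
            (α j.1 * (X *ᵥ evec X j.1) a) = Real.sqrt (ev X j.1) := by
          intro j _
          have hj := hpos j.1 j.2
          have h3 : ∑ a, (α j.1 * (X *ᵥ evec X j.1) a) * (α j.1 * (X *ᵥ evec X j.1) a)
              = α j.1 ^ 2 * ((X *ᵥ evec X j.1) ⬝ᵥ (X *ᵥ evec X j.1)) := by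
            simp only [dotProduct, Finset.mul_sum]
            exact Finset.sum_congr rfl fun a _ => by ring
          rw [h3, hw, hα]
          have h4 : Real.sqrt (Real.sqrt (ev X j.1)) ^ 2 = Real.sqrt (ev X j.1) :=
            Real.sq_sqrt (Real.sqrt_nonneg _)
          rw [inv_pow, h4]
          have h5 : Real.sqrt (ev X j.1) ≠ 0 := by positivity
          have h6 : Real.sqrt (ev X j.1) * Real.sqrt (ev X j.1) = ev X j.1 :=
            Real.mul_self_sqrt hj.le
          field_simp
          rw [Real.sq_sqrt hj.le]
        rw [Finset.sum_congr rfl h2, Finset.sum_attach P (fun j => Real.sqrt (ev X j))]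
      have hCval : frobSq C = ∑ j ∈ P, Real.sqrt (ev X j) := by
        rw [frobSq_eq, Finset.sum_comm]
        have h1 : ∀ b, ∑ c, (C b c) ^ 2 = ∑ j ∈ P.attach,
            (β j.1 * evec X j.1 b) * (β j.1 * evec X j.1 b) := by
          intro b
          simp only [sq, hC, Matrix.of_apply]
          exact collapse P.attach ι hιinj.injOn _ _
        rw [Finset.sum_congr rfl (fun b _ => h1 b), Finset.sum_comm]
        have h2 : ∀ j ∈ P.attach, ∑ b, (β j.1 * evec X j.1 b) * (β j.1 * evec X j.1 b)
            = Real.sqrt (ev X j.1) := by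
          intro j _
          have hj := hpos j.1 j.2
          have h3 : ∑ b, (β j.1 * evec X j.1 b) * (β j.1 * evec X j.1 b)
              = β j.1 ^ 2 * (evec X j.1 ⬝ᵥ evec X j.1) := by
            simp only [dotProduct, Finset.mul_sum]
            exact Finset.sum_congr rfl fun b _ => by ring
          rw [h3, hvv, hβ, mul_one]
          exact Real.sq_sqrt (Real.sqrt_nonneg _)
        rw [Finset.sum_congr rfl h2, Finset.sum_attach P (fun j => Real.sqrt (ev X j))]
      rw [sum_sval, ← hsum0, hBval, hCval]
      ring
  · -- lower bound
    rintro s ⟨B, C, hBC, rfl⟩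
    rw [sum_sval, ← hsum0]
    set u : Fin n → Fin m → ℝ := fun j => (Real.sqrt (ev X j))⁻¹ • (X *ᵥ evec X j) with hu
    have horth : ∀ i ∈ P, ∀ j ∈ P, u i ⬝ᵥ u j = if i = j then 1 else 0 := by
      intro i hi j hj
      rw [hu]
      simp only
      rw [smul_dotProduct, dotProduct_smul, key_dot]
      by_cases h : i = j
      · subst h
        have hj' := hpos i hi
        have h5 : Real.sqrt (ev X i) ≠ 0 := by positivity
        have h6 : Real.sqrt (ev X i) * Real.sqrt (ev X i) = ev X i :=
          Real.mul_self_sqrt hj'.le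
        simp only [if_pos rfl, smul_eq_mul]
        field_simp
        rw [if_pos trivial, if_pos trivial, mul_one, Real.sq_sqrt hj'.le]
      · simp [h]
    have hstep : ∀ j ∈ P, Real.sqrt (ev X j) ≤
        ((Bᵀ *ᵥ u j) ⬝ᵥ (Bᵀ *ᵥ u j) + (Cᵀ *ᵥ evec X j) ⬝ᵥ (Cᵀ *ᵥ evec X j)) / 2 := by
      intro j hj
      have hj' := hpos j hj
      have h1 : Real.sqrt (ev X j) = u j ⬝ᵥ (X *ᵥ evec X j) := by
        rw [hu]
        simp only
        rw [smul_dotProduct, smul_eq_mul]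
        have := key_dot X j j
        simp only [if_pos rfl] at this
        rw [this]
        have h5 : Real.sqrt (ev X j) ≠ 0 := by positivity
        have h6 : Real.sqrt (ev X j) * Real.sqrt (ev X j) = ev X j :=
          Real.mul_self_sqrt hj'.le
        field_simp
        rw [if_pos trivial, Real.sq_sqrt hj'.le]
      have h2 : u j ⬝ᵥ ((B * Cᵀ) *ᵥ evec X j) = (Bᵀ *ᵥ u j) ⬝ᵥ (Cᵀ *ᵥ evec X j) := by
        rw [← Matrix.mulVec_mulVec, Matrix.dotProduct_mulVec,
          Matrix.mulVec_transpose, Matrix.mulVec_transpose]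
      calc Real.sqrt (ev X j) = u j ⬝ᵥ (X *ᵥ evec X j) := h1
        _ = u j ⬝ᵥ ((B * Cᵀ) *ᵥ evec X j) := by rw [hBC]
        _ = (Bᵀ *ᵥ u j) ⬝ᵥ (Cᵀ *ᵥ evec X j) := h2
        _ ≤ _ := dot_amgm _ _
    calc ∑ j ∈ P, Real.sqrt (ev X j)
        ≤ ∑ j ∈ P, ((Bᵀ *ᵥ u j) ⬝ᵥ (Bᵀ *ᵥ u j)
            + (Cᵀ *ᵥ evec X j) ⬝ᵥ (Cᵀ *ᵥ evec X j)) / 2 := Finset.sum_le_sum hstep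
      _ = (∑ j ∈ P, (Bᵀ *ᵥ u j) ⬝ᵥ (Bᵀ *ᵥ u j)
            + ∑ j ∈ P, (Cᵀ *ᵥ evec X j) ⬝ᵥ (Cᵀ *ᵥ evec X j)) / 2 := by
          rw [← Finset.sum_add_distrib, Finset.sum_div]
      _ ≤ (frobSq B + frobSq C) / 2 := by
          have hB' := mbessel P u horth B
          have hC' := mbessel P (evec X) (fun i _ j _ => evec_dot X i j) C
          linarith
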